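/- Let k be a commutative unital ring and n, m ∈ ℕ. Let α_n : F_n → ℤ^n be the abelianization homomorphism of the free group on n generators (sending the i-th generator x_i to the i-th standard basis vector), and let γ_n : ℤ^n → F_n be the set map sending (a_1,…,a_n) to the word x_1^{a_1} x_2^{a_2} ⋯ x_n^{a_n}. Let α : F_n^{×m} → (ℤ^n)^{×m} and γ : (ℤ^n)^{×m} → F_n^{×m} be the componentwise maps, and let Γ : k[(ℤ^n)^{×m}] → k[F_n^{×m}] be the k-linear map sending the basis element corresponding to w to the basis element corresponding to γ(w). Then: (1) α ∘ γ is the identity of (ℤ^n)^{×m} (so Γ is a k-linear section of the algebra homomorphism k[F_n^{×m}] → k[(ℤ^n)^{×m}] induced by α); and (2) for every d ∈ ℕ, Γ maps I_k((ℤ^n)^{×m})^d into I_k(F_n^{×m})^d. -/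

import Mathlib

/-- The abelianization homomorphism `α_n : F_n → ℤ^n`, sending the `i`-th generator
`x_i` to the `i`-th standard basis vector. -/
def alphaN (n : ℕ) : FreeGroup (Fin n) →* Multiplicative (Fin n → ℤ) :=
  FreeGroup.lift fun i => Multiplicative.ofAdd (Pi.single i 1)

/-- The set map `γ_n : ℤ^n → F_n`, `(a₁, …, a_n) ↦ x₁^{a₁} x₂^{a₂} ⋯ x_n^{a_n}`. -/
def gammaN (n : ℕ) (a : Fin n → ℤ) : FreeGroup (Fin n) :=
  (List.ofFn fun i => FreeGroup.of i ^ a i).prod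

/-- The componentwise abelianization homomorphism `α : F_n^{×m} → (ℤ^n)^{×m}`. -/
def alphaM (n m : ℕ) :
    (Fin m → FreeGroup (Fin n)) →* Multiplicative (Fin m → Fin n → ℤ) where
  toFun w := Multiplicative.ofAdd fun j => Multiplicative.toAdd (alphaN n (w j))
  map_one' := by
    simp only [Pi.one_apply, map_one, toAdd_one]
    rfl
  map_mul' x y := by
    simp only [Pi.mul_apply, map_mul, toAdd_mul]
    rfl

/-- The componentwise map `γ : (ℤ^n)^{×m} → F_n^{×m}`. -/
def gammaM (n m : ℕ) (v : Multiplicative (Fin m → Fin n → ℤ)) :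
    Fin m → FreeGroup (Fin n) :=
  fun j => gammaN n (Multiplicative.toAdd v j)

/-- The augmentation ideal of the monoid algebra `k[G]`, i.e. the kernel of the
`k`-algebra homomorphism `k[G] → k` sending each `g ∈ G` to `1`, regarded as a
`k`-submodule of `k[G]`. -/
noncomputable def augIdeal (k : Type*) [CommRing k] (G : Type*) [Monoid G] :
    Submodule k (MonoidAlgebra k G) :=
  Submodule.restrictScalars k (RingHom.ker (MonoidAlgebra.lift k k G 1))

/-- The `d`-th power of the augmentation ideal of `k[G]` (with the usual ideal-theoretic
convention that the zeroth power is the whole ring). -/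
noncomputable def augPow (k : Type*) [CommRing k] (G : Type*) [Monoid G] :
    ℕ → Submodule k (MonoidAlgebra k G)
  | 0 => ⊤
  | d + 1 => augIdeal k G ^ (d + 1)

section lemmas

lemma ofFn_prod_eq_one {M : Type*} [Monoid M] {N : ℕ} (f : Fin N → M)
    (h : ∀ j, f j = 1) : (List.ofFn f).prod = 1 := by
  apply List.prod_eq_one
  intro x hx
  rw [List.mem_ofFn] at hx
  obtain ⟨i, rfl⟩ := hx
  exact h i

lemma ofFn_prod_single {M : Type*} [Monoid M] : ∀ {N : ℕ} (f : Fin N → M) (i : Fin N),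
    (∀ j, j ≠ i → f j = 1) → (List.ofFn f).prod = f i := by
  intro N
  induction N with
  | zero => intro f i; exact i.elim0
  | succ N ih =>
    intro f i h
    rw [List.ofFn_succ, List.prod_cons]
    rcases eq_or_ne i 0 with rfl | hi
    · rw [ofFn_prod_eq_one (fun j => f j.succ) (fun j => h _ (Fin.succ_ne_zero j)), mul_one]
    · obtain ⟨i', rfl⟩ := Fin.exists_succ_eq.mpr hi
      rw [h 0 (Ne.symm (Fin.succ_ne_zero i')),
        ih (fun j => f j.succ) i' (fun j hj => h _ (fun hc => hj (Fin.succ_injective _ hc))),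
        one_mul]

lemma ofFn_prod_split {M : Type*} [Monoid M] : ∀ {N : ℕ} (p : ℕ) (f g : Fin N → M),
    (∀ i : Fin N, ¬(i.val < p) → f i = 1) → (∀ i : Fin N, i.val < p → g i = 1) →
    (List.ofFn fun i => f i * g i).prod = (List.ofFn f).prod * (List.ofFn g).prod := by
  intro N
  induction N with
  | zero => intro p f g _ _; simp
  | succ N ih =>
    intro p f g hf hg
    rw [List.ofFn_succ, List.ofFn_succ (f := f), List.ofFn_succ (f := g),
      List.prod_cons, List.prod_cons, List.prod_cons]
    rcases Nat.eq_zero_or_pos p with rfl | hp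
    · have h1 : ∀ j : Fin (N + 1), f j = 1 := fun j => hf j (by omega)
      have key := ih 0 (fun j : Fin N => f j.succ) (fun j => g j.succ)
        (fun i _ => h1 i.succ) (fun i hi => absurd hi (by omega))
      rw [key, ofFn_prod_eq_one (fun j : Fin N => f j.succ) (fun j => h1 j.succ), h1 0]
      simp only [one_mul]
    · have hg0 : g 0 = 1 := hg 0 (by simpa using hp)
      have key := ih (p - 1) (fun j : Fin N => f j.succ) (fun j => g j.succ)
        (fun i hi => hf i.succ (by simp only [Fin.val_succ]; omega))
        (fun i hi => hg i.succ (by simp only [Fin.val_succ]; omega))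
      rw [key, hg0, one_mul, mul_one]
      exact (mul_assoc _ _ _).symm

lemma gammaN_zero (n : ℕ) : gammaN n 0 = 1 :=
  ofFn_prod_eq_one _ (by simp)

lemma gammaN_single (n : ℕ) (i : Fin n) (r : ℤ) :
    gammaN n (Pi.single i r) = FreeGroup.of i ^ r := by
  have h := ofFn_prod_single (fun j => FreeGroup.of j ^ (Pi.single i r : Fin n → ℤ) j) i
    (fun j hj => by simp only [Pi.single_eq_of_ne hj, zpow_zero])
  rw [gammaN, h]
  simp

lemma gammaN_add_split (n : ℕ) (p : ℕ) (v w : Fin n → ℤ)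
    (hv : ∀ i : Fin n, ¬(i.val < p) → v i = 0) (hw : ∀ i : Fin n, i.val < p → w i = 0) :
    gammaN n (v + w) = gammaN n v * gammaN n w := by
  unfold gammaN
  rw [← ofFn_prod_split p (fun i => FreeGroup.of i ^ v i) (fun i => FreeGroup.of i ^ w i)
    (fun i hi => by show FreeGroup.of i ^ v i = 1; rw [hv i hi, zpow_zero])
    (fun i hi => by show FreeGroup.of i ^ w i = 1; rw [hw i hi, zpow_zero])]
  simp [zpow_add]

lemma gammaM_add_split (n m : ℕ) (p : ℕ) (a b : Fin m → Fin n → ℤ)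
    (ha : ∀ (j : Fin m) (i : Fin n), ¬(j.val * n + i.val < p) → a j i = 0)
    (hb : ∀ (j : Fin m) (i : Fin n), j.val * n + i.val < p → b j i = 0) :
    gammaM n m (Multiplicative.ofAdd (a + b)) =
      gammaM n m (Multiplicative.ofAdd a) * gammaM n m (Multiplicative.ofAdd b) := by
  funext j
  show gammaN n ((a + b) j) = gammaN n (a j) * gammaN n (b j)
  rw [Pi.add_apply]
  apply gammaN_add_split n (p - j.val * n)
  · intro i hi; exact ha j i (by omega)
  · intro i hi; exact hb j i (by omega)

lemma gammaM_single (n m : ℕ) (j : Fin m) (i : Fin n) (r : ℤ) :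
    gammaM n m (Multiplicative.ofAdd (Pi.single j (Pi.single i r))) =
      Pi.mulSingle j (FreeGroup.of i ^ r) := by
  funext j'
  show gammaN n ((Pi.single j (Pi.single i r) : Fin m → Fin n → ℤ) j') = _
  rcases eq_or_ne j' j with rfl | hj
  · rw [Pi.single_eq_same, Pi.mulSingle_eq_same, gammaN_single]
  · rw [Pi.single_eq_of_ne hj, Pi.mulSingle_eq_of_ne hj, gammaN_zero]

lemma alphaN_gammaN (n : ℕ) (a : Fin n → ℤ) :
    alphaN n (gammaN n a) = Multiplicative.ofAdd a := by
  unfold gammaN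
  rw [map_list_prod, List.map_ofFn]
  have h : ∀ i, alphaN n (FreeGroup.of i ^ a i)
      = Multiplicative.ofAdd (Pi.single i (a i) : Fin n → ℤ) := by
    intro i
    rw [map_zpow]
    have : alphaN n (FreeGroup.of i) = Multiplicative.ofAdd (Pi.single i 1 : Fin n → ℤ) :=
      FreeGroup.lift_apply_of
    rw [this, ← ofAdd_zsmul]
    congr 1
    funext j
    rcases eq_or_ne j i with rfl | hj
    · simp
    · simp [Pi.single_eq_of_ne hj]
  show (List.ofFn fun i => alphaN n (FreeGroup.of i ^ a i)).prod = _
  simp only [h]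
  rw [List.prod_ofFn, ← ofAdd_sum, Finset.univ_sum_single]

lemma alphaM_gammaM (n m : ℕ) (v : Multiplicative (Fin m → Fin n → ℤ)) :
    alphaM n m (gammaM n m v) = v := by
  show Multiplicative.ofAdd (fun j => Multiplicative.toAdd (alphaN n (gammaM n m v j))) = v
  have h : ∀ j, alphaN n (gammaM n m v j) = Multiplicative.ofAdd (Multiplicative.toAdd v j) :=
    fun j => alphaN_gammaN n _
  simp only [h]
  rfl

end lemmas

section aug
variable (k : Type*) [CommRing k] (G : Type*) [Monoid G]

lemma mem_augIdeal_iff (x : MonoidAlgebra k G) :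
    x ∈ augIdeal k G ↔ (MonoidAlgebra.lift k k G 1) x = 0 := by
  rw [augIdeal, Submodule.restrictScalars_mem, RingHom.mem_ker]

lemma of_sub_one_mem (g : G) : MonoidAlgebra.of k G g - 1 ∈ augIdeal k G := by
  rw [mem_augIdeal_iff]
  have : ((MonoidAlgebra.lift k k G) 1) (MonoidAlgebra.of k G g - 1)
      = ((MonoidAlgebra.lift k k G) 1) (MonoidAlgebra.of k G g)
        - ((MonoidAlgebra.lift k k G) 1) 1 := map_sub _ _ _
  rw [this, MonoidAlgebra.lift_of, map_one]
  simp

lemma augIdeal_mul_top : augIdeal k G * (⊤ : Submodule k (MonoidAlgebra k G)) ≤ augIdeal k G := by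
  rw [Submodule.mul_le]
  intro x hx y _
  rw [mem_augIdeal_iff] at hx ⊢
  rw [map_mul, hx, zero_mul]

lemma top_mul_augIdeal : (⊤ : Submodule k (MonoidAlgebra k G)) * augIdeal k G ≤ augIdeal k G := by
  rw [Submodule.mul_le]
  intro x _ y hy
  rw [mem_augIdeal_iff] at hy ⊢
  rw [map_mul, hy, mul_zero]

lemma augPow_mul_right (e : ℕ) (x : MonoidAlgebra k G) (hx : x ∈ augIdeal k G ^ (e + 1))
    (r : MonoidAlgebra k G) : x * r ∈ augIdeal k G ^ (e + 1) := by
  have h : augIdeal k G ^ (e + 1) * ⊤ ≤ augIdeal k G ^ (e + 1) := by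
    rw [pow_succ, mul_assoc]
    exact mul_le_mul' le_rfl (augIdeal_mul_top k G)
  exact h (Submodule.mul_mem_mul hx Submodule.mem_top)

lemma augPow_mul_left (e : ℕ) (x : MonoidAlgebra k G) (hx : x ∈ augIdeal k G ^ (e + 1))
    (r : MonoidAlgebra k G) : r * x ∈ augIdeal k G ^ (e + 1) := by
  have h : (⊤ : Submodule k (MonoidAlgebra k G)) * augIdeal k G ^ (e + 1)
      ≤ augIdeal k G ^ (e + 1) := by
    rw [pow_succ', ← mul_assoc]
    exact mul_le_mul' (top_mul_augIdeal k G) le_rfl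
  exact h (Submodule.mul_mem_mul Submodule.mem_top hx)

lemma augPow_eq (d : ℕ) (h : d ≠ 0) : augPow k G d = augIdeal k G ^ d := by
  cases d with
  | zero => exact absurd rfl h
  | succ d => rfl

lemma augPow_combine (d₁ e : ℕ) (u v w z : MonoidAlgebra k G)
    (hu : u ∈ augPow k G d₁) (hv : v ∈ augIdeal k G ^ (e + 1)) :
    u * (w * v) * z ∈ augPow k G (d₁ + (e + 1)) := by
  cases d₁ with
  | zero =>
    rw [zero_add, augPow_eq k G _ (Nat.succ_ne_zero e)]
    exact augPow_mul_right k G e _ (augPow_mul_left k G e _ (augPow_mul_left k G e v hv w) u) z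
  | succ d' =>
    rw [augPow_eq k G _ (by omega)]
    have h1 : u * (w * v) ∈ augIdeal k G ^ (d' + 1 + (e + 1)) := by
      rw [pow_add]
      exact Submodule.mul_mem_mul hu (augPow_mul_left k G e v hv w)
    have h2 : d' + 1 + (e + 1) = (d' + e + 1) + 1 := by omega
    rw [h2] at h1 ⊢
    exact augPow_mul_right k G _ _ h1 z

lemma pow_mono {J K : Submodule k (MonoidAlgebra k G)} (h : J ≤ K) :
    ∀ d : ℕ, J ^ d ≤ K ^ d := by
  intro d
  induction d with
  | zero => simp
  | succ d ih => rw [pow_succ, pow_succ]; exact mul_le_mul' ih h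

lemma mem_span_of_sub_one {x : MonoidAlgebra k G} (hx : x ∈ augIdeal k G) :
    x ∈ Submodule.span k {y : MonoidAlgebra k G | ∃ g : G, y = MonoidAlgebra.of k G g - 1} := by
  rw [mem_augIdeal_iff] at hx
  have heps : (x.coeff.sum fun _ a => a) = 0 := by
    rw [MonoidAlgebra.lift_apply] at hx
    simpa using hx
  have hrepr : x = x.coeff.sum fun g a => a • (MonoidAlgebra.of k G g - 1) := by
    have h1 : (x.coeff.sum fun g a => a • (MonoidAlgebra.of k G g - 1))
        = (x.coeff.sum fun g a => a • (MonoidAlgebra.of k G g : MonoidAlgebra k G))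
          - x.coeff.sum fun g a => a • (1 : MonoidAlgebra k G) := by
      rw [← Finsupp.sum_sub]
      exact Finsupp.sum_congr fun g _ => smul_sub _ _ _
    have h2 : (x.coeff.sum fun g a => a • (MonoidAlgebra.of k G g : MonoidAlgebra k G)) = x := by
      have : ∀ (g : G) (a : k), a • (MonoidAlgebra.of k G g : MonoidAlgebra k G)
          = MonoidAlgebra.single g a := by
        intro g a
        show a • MonoidAlgebra.single g (1 : k) = _
        rw [MonoidAlgebra.smul_single', mul_one]
      simp only [this]
      exact MonoidAlgebra.sum_coeff_single x
    have h3 : (x.coeff.sum fun g a => a • (1 : MonoidAlgebra k G)) = 0 := by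
      rw [Finsupp.sum, ← Finset.sum_smul]
      rw [show (∑ g ∈ x.coeff.support, x.coeff g) = x.coeff.sum fun _ a => a from rfl, heps, zero_smul]
    rw [h1, h2, h3, sub_zero]
  rw [hrepr]
  exact Submodule.sum_mem _ fun g hg => Submodule.smul_mem _ _ (Submodule.subset_span ⟨g, rfl⟩)
end aug

section main
variable (k : Type*) [CommRing k] (n m : ℕ)

abbrev AA := Multiplicative (Fin m → Fin n → ℤ)
abbrev FF := Fin m → FreeGroup (Fin n)

def tc (c : Fin m × Fin n) : AA n m :=
  Multiplicative.ofAdd (Pi.single c.1 (Pi.single c.2 (1 : ℤ)))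

def Xc (c : Fin m × Fin n) : FF n m := Pi.mulSingle c.1 (FreeGroup.of c.2)

noncomputable def Gam : MonoidAlgebra k (AA n m) →ₗ[k] MonoidAlgebra k (FF n m) :=
  MonoidAlgebra.mapDomainLinearMap k k (gammaM n m)

lemma Gam_single (g : AA n m) (a : k) :
    Gam k n m (MonoidAlgebra.single g a) = MonoidAlgebra.single (gammaM n m g) a := by
  rw [Gam, MonoidAlgebra.mapDomainLinearMap_single]

lemma Gam_sum_repr (x : MonoidAlgebra k (AA n m)) :
    Gam k n m x = x.coeff.sum fun g a => MonoidAlgebra.single (gammaM n m g) a := by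
  rw [Gam]
  conv_lhs => rw [← MonoidAlgebra.sum_coeff_single x]
  rw [map_finsuppSum]
  simp only [MonoidAlgebra.mapDomainLinearMap_single]

def CLT (p : ℕ) (g : AA n m) : Prop :=
  ∀ (j : Fin m) (i : Fin n), Multiplicative.toAdd g j i ≠ 0 → j.val * n + i.val < p

def CGE (p : ℕ) (g : AA n m) : Prop :=
  ∀ (j : Fin m) (i : Fin n), Multiplicative.toAdd g j i ≠ 0 → p ≤ j.val * n + i.val

def CEQ (c : Fin m × Fin n) (g : AA n m) : Prop :=
  ∀ (j : Fin m) (i : Fin n), Multiplicative.toAdd g j i ≠ 0 → j = c.1 ∧ i = c.2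

lemma gammaM_mul_split (p : ℕ) (g h : AA n m) (hg : CLT n m p g) (hh : CGE n m p h) :
    gammaM n m (g * h) = gammaM n m g * gammaM n m h := by
  have key := gammaM_add_split n m p (Multiplicative.toAdd g) (Multiplicative.toAdd h)
    (fun j i hji => by by_contra h0; exact hji (hg j i h0))
    (fun j i hji => by by_contra h0; have := hh j i h0; omega)
  simpa using key

lemma Gam_mul_split (p : ℕ) (x y : MonoidAlgebra k (AA n m))
    (hx : ∀ g ∈ x.coeff.support, CLT n m p g) (hy : ∀ h ∈ y.coeff.support, CGE n m p h) :
    Gam k n m (x * y) = Gam k n m x * Gam k n m y := by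
  rw [MonoidAlgebra.mul_def, map_finsuppSum]
  rw [Gam_sum_repr k n m x]
  rw [Finsupp.sum_mul]
  apply Finsupp.sum_congr
  intro g hg
  rw [map_finsuppSum, Gam_sum_repr k n m y, Finsupp.mul_sum]
  apply Finsupp.sum_congr
  intro h hh
  rw [Gam_single, MonoidAlgebra.single_mul_single, gammaM_mul_split n m p g h (hx g hg) (hy h hh)]

lemma support_cond_mul {P Q R : AA n m → Prop} {x y : MonoidAlgebra k (AA n m)}
    (hx : ∀ g ∈ x.coeff.support, P g) (hy : ∀ h ∈ y.coeff.support, Q h)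
    (hPQR : ∀ g h, P g → Q h → R (g * h)) : ∀ u ∈ (x * y).coeff.support, R u := by
  classical
  intro u hu
  have hmem := MonoidAlgebra.support_coeff_mul_subset x y hu
  rw [Finset.mem_mul] at hmem
  obtain ⟨g, hg, h, hh, rfl⟩ := hmem
  exact hPQR g h (hx g hg) (hy h hh)

lemma supp_of (g : AA n m) :
    ∀ u ∈ (MonoidAlgebra.of k (AA n m) g).coeff.support, u = g := by
  intro u hu
  have := Finsupp.support_single_subset hu
  simpa using this

lemma supp_tc_sub_one (c : Fin m × Fin n) :
    ∀ u ∈ (MonoidAlgebra.of k (AA n m) (tc n m c) - 1).coeff.support, u = tc n m c ∨ u = 1 := by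
  classical
  intro u hu
  have h1 : (MonoidAlgebra.of k (AA n m) (tc n m c) - 1).coeff.support ⊆
      (MonoidAlgebra.of k (AA n m) (tc n m c)).coeff.support ∪
      (1 : MonoidAlgebra k (AA n m)).coeff.support := Finsupp.support_sub
  rcases Finset.mem_union.mp (h1 hu) with h | h
  · exact Or.inl (supp_of k n m _ u h)
  · right
    rw [MonoidAlgebra.one_def] at h
    simpa using Finsupp.support_single_subset h

lemma toAdd_mul_apply (g h : AA n m) (j : Fin m) (i : Fin n) :
    Multiplicative.toAdd (g * h) j i = Multiplicative.toAdd g j i + Multiplicative.toAdd h j i :=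
  rfl

lemma CEQ_one (c : Fin m × Fin n) : CEQ n m c 1 := by
  intro j i h
  exact absurd rfl h

lemma CEQ_tc (c : Fin m × Fin n) : CEQ n m c (tc n m c) := by
  intro j i h
  show _ ∧ _
  by_contra hcon
  apply h
  show (Pi.single c.1 (Pi.single c.2 (1:ℤ)) : Fin m → Fin n → ℤ) j i = 0
  rcases eq_or_ne j c.1 with rfl | hj
  · rcases eq_or_ne i c.2 with rfl | hi
    · exact absurd ⟨rfl, rfl⟩ hcon
    · rw [Pi.single_eq_same, Pi.single_eq_of_ne hi]
  · rw [Pi.single_eq_of_ne hj]; rfl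

lemma CEQ_mul (c : Fin m × Fin n) (g h : AA n m) (hg : CEQ n m c g) (hh : CEQ n m c h) :
    CEQ n m c (g * h) := by
  intro j i hji
  rw [toAdd_mul_apply] at hji
  rcases eq_or_ne (Multiplicative.toAdd g j i) 0 with h0 | h0
  · exact hh j i (by omega)
  · exact hg j i h0

lemma supp_pow_CEQ (c : Fin m × Fin n) (e : ℕ) :
    ∀ u ∈ ((MonoidAlgebra.of k (AA n m) (tc n m c) - 1) ^ e).coeff.support, CEQ n m c u := by
  induction e with
  | zero =>
    intro u hu
    rw [pow_zero, MonoidAlgebra.one_def] at hu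
    have := Finsupp.support_single_subset hu
    simp only [Finset.mem_singleton] at this
    rw [this]
    exact CEQ_one n m c
  | succ e ih =>
    rw [pow_succ]
    exact support_cond_mul k n m ih (supp_tc_sub_one k n m c)
      (fun g h hg hh => CEQ_mul n m c g h hg
        (by rcases hh with rfl | rfl; exacts [CEQ_tc n m c, CEQ_one n m c]))

lemma supp_mid_CEQ (c : Fin m × Fin n) (s : ℤ) (e : ℕ) :
    ∀ u ∈ (MonoidAlgebra.of k (AA n m) (Multiplicative.ofAdd (Pi.single c.1 (Pi.single c.2 s)))
      * (MonoidAlgebra.of k (AA n m) (tc n m c) - 1) ^ e).coeff.support, CEQ n m c u := by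
  apply support_cond_mul k n m (P := fun g => CEQ n m c g) (Q := fun g => CEQ n m c g)
    (R := fun g => CEQ n m c g)
  · intro g hg
    rw [supp_of k n m _ g hg]
    intro j i hji
    show _ ∧ _
    by_contra hcon
    apply hji
    show (Pi.single c.1 (Pi.single c.2 s) : Fin m → Fin n → ℤ) j i = 0
    rcases eq_or_ne j c.1 with rfl | hj
    · rcases eq_or_ne i c.2 with rfl | hi
      · exact absurd ⟨rfl, rfl⟩ hcon
      · rw [Pi.single_eq_same, Pi.single_eq_of_ne hi]
    · rw [Pi.single_eq_of_ne hj]; rfl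
  · exact supp_pow_CEQ k n m c e
  · exact CEQ_mul n m c

lemma supp_prod_CLT (p : ℕ) (b : Fin m → Fin n → ℤ)
    (hb : ∀ (j : Fin m) (i : Fin n), b j i ≠ 0 → j.val * n + i.val < p) :
    ∀ (L : List (Fin m × Fin n)), (∀ c ∈ L, c.1.val * n + c.2.val < p) →
    ∀ u ∈ (MonoidAlgebra.of k (AA n m) (Multiplicative.ofAdd b) *
      (L.map fun c => MonoidAlgebra.of k (AA n m) (tc n m c) - 1).prod).coeff.support, CLT n m p u := by
  intro L
  induction L with
  | nil =>
    intro _ u hu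
    rw [List.map_nil, List.prod_nil, mul_one] at hu
    rw [supp_of k n m _ u hu]
    exact hb
  | cons c L' ih =>
    intro hL u hu
    have hrw : MonoidAlgebra.of k (AA n m) (Multiplicative.ofAdd b) *
        ((List.map (fun c => MonoidAlgebra.of k (AA n m) (tc n m c) - 1) (c :: L')).prod)
        = (MonoidAlgebra.of k (AA n m) (Multiplicative.ofAdd b) *
          (List.map (fun c => MonoidAlgebra.of k (AA n m) (tc n m c) - 1) L').prod)
          * (MonoidAlgebra.of k (AA n m) (tc n m c) - 1) := by
      rw [List.map_cons, List.prod_cons]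
      ring
    rw [hrw] at hu
    refine support_cond_mul k n m (P := CLT n m p) (Q := fun h => h = tc n m c ∨ h = 1)
      (ih (fun c' hc' => hL c' (List.mem_cons_of_mem c hc'))) (supp_tc_sub_one k n m c)
      ?_ u hu
    intro g h hg hh j i hji
    rw [toAdd_mul_apply] at hji
    rcases eq_or_ne (Multiplicative.toAdd g j i) 0 with h0 | h0
    · have hne : Multiplicative.toAdd h j i ≠ 0 := by omega
      rcases hh with rfl | rfl
      · have := CEQ_tc n m c j i hne
        obtain ⟨rfl, rfl⟩ := this
        exact hL c (List.mem_cons_self (a := c) (l := L'))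
      · exact absurd rfl hne
    · exact hg j i h0

noncomputable def PhiA (c : Fin m × Fin n) :
    MonoidAlgebra k (Multiplicative ℤ) →ₐ[k] MonoidAlgebra k (AA n m) :=
  MonoidAlgebra.mapDomainAlgHom k k (zpowersHom (AA n m) (tc n m c))

noncomputable def PhiF (c : Fin m × Fin n) :
    MonoidAlgebra k (Multiplicative ℤ) →ₐ[k] MonoidAlgebra k (FF n m) :=
  MonoidAlgebra.mapDomainAlgHom k k (zpowersHom (FF n m) (Xc n m c))

lemma tc_zpow (c : Fin m × Fin n) (s : ℤ) :
    tc n m c ^ s = Multiplicative.ofAdd (Pi.single c.1 (Pi.single c.2 s)) := by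
  rw [tc, ← ofAdd_zsmul]
  congr 1
  rw [← Pi.single_smul, ← Pi.single_smul, smul_eq_mul, mul_one]

lemma gammaM_tc_zpow (c : Fin m × Fin n) (s : ℤ) :
    gammaM n m (tc n m c ^ s) = Xc n m c ^ s := by
  rw [tc_zpow, gammaM_single, Xc, Pi.mulSingle_zpow]

lemma PhiA_single (c : Fin m × Fin n) (a : Multiplicative ℤ) (b : k) :
    PhiA k n m c (MonoidAlgebra.single a b)
      = MonoidAlgebra.single (tc n m c ^ Multiplicative.toAdd a) b := by
  rw [PhiA, MonoidAlgebra.mapDomainAlgHom_apply, MonoidAlgebra.mapDomain_single, zpowersHom_apply]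

lemma PhiF_single (c : Fin m × Fin n) (a : Multiplicative ℤ) (b : k) :
    PhiF k n m c (MonoidAlgebra.single a b)
      = MonoidAlgebra.single (Xc n m c ^ Multiplicative.toAdd a) b := by
  rw [PhiF, MonoidAlgebra.mapDomainAlgHom_apply, MonoidAlgebra.mapDomain_single, zpowersHom_apply]

lemma Gam_PhiA (c : Fin m × Fin n) (u : MonoidAlgebra k (Multiplicative ℤ)) :
    Gam k n m (PhiA k n m c u) = PhiF k n m c u := by
  induction u using MonoidAlgebra.induction_linear with
  | zero => rw [map_zero, map_zero, map_zero]
  | add f g hf hg => rw [map_add, map_add, map_add, hf, hg]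
  | single a b => rw [PhiA_single, PhiF_single, Gam_single, gammaM_tc_zpow]


lemma ord_inj {j j' : Fin m} {i i' : Fin n}
    (h : j.val * n + i.val = j'.val * n + i'.val) : j = j' ∧ i = i' := by
  have hi := i.isLt
  have hi' := i'.isLt
  have hjj : j.val = j'.val := by
    rcases Nat.lt_trichotomy j.val j'.val with hlt | he | hgt
    · have h1 : (j.val + 1) * n ≤ j'.val * n := Nat.mul_le_mul_right n hlt
      rw [Nat.succ_mul] at h1
      omega
    · exact he
    · have h1 : (j'.val + 1) * n ≤ j.val * n := Nat.mul_le_mul_right n hgt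
      rw [Nat.succ_mul] at h1
      omega
  exact ⟨Fin.ext hjj, Fin.ext (by rw [hjj] at h; omega)⟩

lemma CLT_mul (p : ℕ) (g h : AA n m) (hg : CLT n m p g) (hh : CLT n m p h) :
    CLT n m p (g * h) := by
  intro j i hji
  rw [toAdd_mul_apply] at hji
  rcases eq_or_ne (Multiplicative.toAdd g j i) 0 with h0 | h0
  · exact hh j i (by omega)
  · exact hg j i h0

lemma CLT_mono {p q : ℕ} (hpq : p ≤ q) (g : AA n m) (hg : CLT n m p g) : CLT n m q g :=
  fun j i hji => lt_of_lt_of_le (hg j i hji) hpq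

lemma key : ∀ (N : ℕ) (L : List (Fin m × Fin n)), L.length = N → ∀ b : Fin m → Fin n → ℤ,
    Gam k n m (MonoidAlgebra.of k (AA n m) (Multiplicative.ofAdd b) *
      (L.map fun c => MonoidAlgebra.of k (AA n m) (tc n m c) - 1).prod)
      ∈ augPow k (FF n m) N := by
  intro N
  induction N using Nat.strong_induction_on with
  | _ N ih =>
    intro L hL b
    cases L with
    | nil =>
      have : N = 0 := by simpa using hL.symm
      subst this
      exact Submodule.mem_top
    | cons c₀ L₀ =>
      classical
      obtain ⟨c, hc⟩ : ∃ c, List.argmax (fun c : Fin m × Fin n => c.1.val * n + c.2.val)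
          (c₀ :: L₀) = some c := by
        rw [← Option.ne_none_iff_exists']
        intro hnone
        exact (List.cons_ne_nil c₀ L₀) (List.argmax_eq_none.mp hnone)
      have hcL : c ∈ c₀ :: L₀ := List.argmax_mem hc
      have hmax : ∀ c' ∈ c₀ :: L₀, c'.1.val * n + c'.2.val ≤ c.1.val * n + c.2.val :=
        fun c' h' => List.le_of_mem_argmax h' hc
      set L₂ := (c₀ :: L₀).filter (fun x => decide (x = c)) with hL₂def
      set L₁ := (c₀ :: L₀).filter (fun x => !decide (x = c)) with hL₁def
      have hperm : (L₂ ++ L₁).Perm (c₀ :: L₀) := List.filter_append_perm _ _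
      have hce : c ∈ L₂ := List.mem_filter.mpr ⟨hcL, by simp⟩
      have he1 : 1 ≤ L₂.length := List.length_pos_iff.mpr (List.ne_nil_of_mem hce)
      have hlen : L₂.length + L₁.length = (c₀ :: L₀).length := by
        rw [← List.length_append]
        exact hperm.length_eq
      obtain ⟨e', he'⟩ : ∃ e', L₂.length = e' + 1 := ⟨L₂.length - 1, by omega⟩
      have hL₁lt : ∀ c' ∈ L₁, c'.1.val * n + c'.2.val < c.1.val * n + c.2.val := by
        intro c' h'
        rw [List.mem_filter] at h'
        have hne : c' ≠ c := by simpa using h'.2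
        have hle := hmax c' h'.1
        rcases Nat.lt_or_ge (c'.1.val * n + c'.2.val) (c.1.val * n + c.2.val) with h | h
        · exact h
        · obtain ⟨h1, h2⟩ := ord_inj n m (le_antisymm hle h)
          exact absurd (Prod.ext h1 h2) hne
      -- split of b
      set b1 : Fin m → Fin n → ℤ :=
        (fun j i => if j.val * n + i.val < c.1.val * n + c.2.val then b j i else 0) with hb1def
      set b3 : Fin m → Fin n → ℤ :=
        (fun j i => if c.1.val * n + c.2.val < j.val * n + i.val then b j i else 0) with hb3def
      have hbsum : b = b1 + (Pi.single c.1 (Pi.single c.2 (b c.1 c.2)) : Fin m → Fin n → ℤ) + b3 := by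
        funext j i
        have hb2v : (Pi.single c.1 (Pi.single c.2 (b c.1 c.2)) : Fin m → Fin n → ℤ) j i
            = if j.val * n + i.val = c.1.val * n + c.2.val then b j i else 0 := by
          rcases eq_or_ne j c.1 with rfl | hj
          · rcases eq_or_ne i c.2 with rfl | hi
            · rw [Pi.single_eq_same, Pi.single_eq_same, if_pos rfl]
            · rw [Pi.single_eq_same, Pi.single_eq_of_ne hi,
                if_neg (fun hcon => hi (ord_inj n m hcon).2)]
          · rw [Pi.single_eq_of_ne hj,
              if_neg (fun hcon => hj (ord_inj n m hcon).1)]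
            rfl
        simp only [Pi.add_apply, hb1def, hb3def, hb2v]
        rcases Nat.lt_trichotomy (j.val * n + i.val) (c.1.val * n + c.2.val) with h | h | h
        · rw [if_pos h, if_neg (by omega), if_neg (by omega)]; ring
        · rw [if_neg (by omega), if_pos h, if_neg (by omega)]; ring
        · rw [if_neg (by omega), if_neg (by omega), if_pos h]; ring
      -- product decomposition
      have hp2 : ((L₂ ++ L₁).map fun c' => MonoidAlgebra.of k (AA n m) (tc n m c') - 1).prod
          = ((c₀ :: L₀).map fun c' => MonoidAlgebra.of k (AA n m) (tc n m c') - 1).prod :=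
        (hperm.map _).prod_eq
      rw [List.map_append, List.prod_append] at hp2
      have hp3 : (L₂.map fun c' => MonoidAlgebra.of k (AA n m) (tc n m c') - 1).prod
          = (MonoidAlgebra.of k (AA n m) (tc n m c) - 1) ^ L₂.length := by
        rw [← List.length_map (as := L₂) (f := fun c' => MonoidAlgebra.of k (AA n m) (tc n m c') - 1)]
        apply List.prod_eq_pow_card
        intro x hx
        rw [List.mem_map] at hx
        obtain ⟨c', hc', rfl⟩ := hx
        rw [List.mem_filter] at hc'
        have : c' = c := by simpa using hc'.2
        rw [this]
      have hE : MonoidAlgebra.of k (AA n m) (Multiplicative.ofAdd b) *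
          ((c₀ :: L₀).map fun c' => MonoidAlgebra.of k (AA n m) (tc n m c') - 1).prod
          = ((MonoidAlgebra.of k (AA n m) (Multiplicative.ofAdd b1) *
              (L₁.map fun c' => MonoidAlgebra.of k (AA n m) (tc n m c') - 1).prod) *
             (MonoidAlgebra.of k (AA n m)
                (Multiplicative.ofAdd (Pi.single c.1 (Pi.single c.2 (b c.1 c.2)))) *
              (MonoidAlgebra.of k (AA n m) (tc n m c) - 1) ^ L₂.length)) *
            MonoidAlgebra.of k (AA n m) (Multiplicative.ofAdd b3) := by
        rw [← hp2, hp3]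
        have hmul : Multiplicative.ofAdd b
            = Multiplicative.ofAdd b1 *
              Multiplicative.ofAdd (Pi.single c.1 (Pi.single c.2 (b c.1 c.2)) : Fin m → Fin n → ℤ) *
              Multiplicative.ofAdd b3 := by
          rw [← ofAdd_add, ← ofAdd_add, ← hbsum]
        rw [hmul, map_mul, map_mul]
        ring
      rw [hE]
      -- support facts
      have hb1cond : ∀ (j : Fin m) (i : Fin n), b1 j i ≠ 0 →
          j.val * n + i.val < c.1.val * n + c.2.val := by
        intro j i hji
        by_contra hno
        apply hji
        simp only [hb1def]
        rw [if_neg hno]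
      have hsupp_x : ∀ u ∈ (MonoidAlgebra.of k (AA n m) (Multiplicative.ofAdd b1) *
          (L₁.map fun c' => MonoidAlgebra.of k (AA n m) (tc n m c') - 1).prod).coeff.support,
          CLT n m (c.1.val * n + c.2.val) u :=
        supp_prod_CLT k n m _ b1 hb1cond L₁ hL₁lt
      have hsupp_mid : ∀ u ∈ (MonoidAlgebra.of k (AA n m)
          (Multiplicative.ofAdd (Pi.single c.1 (Pi.single c.2 (b c.1 c.2)))) *
          (MonoidAlgebra.of k (AA n m) (tc n m c) - 1) ^ L₂.length).coeff.support, CEQ n m c u :=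
        supp_mid_CEQ k n m c (b c.1 c.2) L₂.length
      have hsupp_xmid : ∀ u ∈ ((MonoidAlgebra.of k (AA n m) (Multiplicative.ofAdd b1) *
          (L₁.map fun c' => MonoidAlgebra.of k (AA n m) (tc n m c') - 1).prod) *
          (MonoidAlgebra.of k (AA n m)
            (Multiplicative.ofAdd (Pi.single c.1 (Pi.single c.2 (b c.1 c.2)))) *
          (MonoidAlgebra.of k (AA n m) (tc n m c) - 1) ^ L₂.length)).coeff.support,
          CLT n m (c.1.val * n + c.2.val + 1) u := by
        apply support_cond_mul k n m (P := CLT n m (c.1.val * n + c.2.val))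
          (Q := CEQ n m c) (R := CLT n m (c.1.val * n + c.2.val + 1)) hsupp_x hsupp_mid
        intro g h hg hh j i hji
        rw [toAdd_mul_apply] at hji
        rcases eq_or_ne (Multiplicative.toAdd g j i) 0 with h0 | h0
        · obtain ⟨rfl, rfl⟩ := hh j i (by omega)
          omega
        · have := hg j i h0
          omega
      have hsupp_y : ∀ u ∈ (MonoidAlgebra.of k (AA n m) (Multiplicative.ofAdd b3)).coeff.support,
          CGE n m (c.1.val * n + c.2.val + 1) u := by
        intro u hu
        rw [supp_of k n m _ u hu]
        intro j i hji
        have hji' : b3 j i ≠ 0 := hji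
        by_contra hno
        apply hji'
        simp only [hb3def]
        rw [if_neg (by omega)]
      rw [Gam_mul_split k n m (c.1.val * n + c.2.val + 1) _ _ hsupp_xmid hsupp_y,
        Gam_mul_split k n m (c.1.val * n + c.2.val) _ _ hsupp_x
          (fun u hu j i hji => by obtain ⟨rfl, rfl⟩ := hsupp_mid u hu j i hji; exact le_refl _)]
      -- compute Gamma of the middle factor
      have hmidPhi : MonoidAlgebra.of k (AA n m)
            (Multiplicative.ofAdd (Pi.single c.1 (Pi.single c.2 (b c.1 c.2)))) *
          (MonoidAlgebra.of k (AA n m) (tc n m c) - 1) ^ L₂.length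
          = PhiA k n m c (MonoidAlgebra.single (Multiplicative.ofAdd (b c.1 c.2)) 1 *
            (MonoidAlgebra.single (Multiplicative.ofAdd (1 : ℤ)) 1 - 1) ^ L₂.length) := by
        rw [map_mul, map_pow, map_sub, map_one (PhiA k n m c), PhiA_single, PhiA_single]
        have h1 : tc n m c ^ Multiplicative.toAdd (Multiplicative.ofAdd (b c.1 c.2))
            = Multiplicative.ofAdd (Pi.single c.1 (Pi.single c.2 (b c.1 c.2))) := by
          rw [toAdd_ofAdd]; exact tc_zpow n m c _
        have h2 : tc n m c ^ Multiplicative.toAdd (Multiplicative.ofAdd (1 : ℤ)) = tc n m c := by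
          rw [toAdd_ofAdd, zpow_one]
        rw [h1, h2]
        rfl
      have hmidGam : Gam k n m (MonoidAlgebra.of k (AA n m)
            (Multiplicative.ofAdd (Pi.single c.1 (Pi.single c.2 (b c.1 c.2)))) *
          (MonoidAlgebra.of k (AA n m) (tc n m c) - 1) ^ L₂.length)
          = MonoidAlgebra.of k (FF n m) (Xc n m c ^ (b c.1 c.2)) *
            (MonoidAlgebra.of k (FF n m) (Xc n m c) - 1) ^ L₂.length := by
        rw [hmidPhi, Gam_PhiA, map_mul, map_pow, map_sub, map_one (PhiF k n m c), PhiF_single, PhiF_single]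
        have h2 : Xc n m c ^ Multiplicative.toAdd (Multiplicative.ofAdd (1 : ℤ)) = Xc n m c := by
          rw [toAdd_ofAdd, zpow_one]
        rw [h2]
        rfl
      rw [hmidGam]
      -- memberships
      have hmemx : Gam k n m (MonoidAlgebra.of k (AA n m) (Multiplicative.ofAdd b1) *
          (L₁.map fun c' => MonoidAlgebra.of k (AA n m) (tc n m c') - 1).prod)
          ∈ augPow k (FF n m) L₁.length := by
        apply ih L₁.length ?_ L₁ rfl b1
        have : (c₀ :: L₀).length = N := hL
        omega
      have hIe : (MonoidAlgebra.of k (FF n m) (Xc n m c) - 1) ^ L₂.length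
          ∈ augIdeal k (FF n m) ^ (e' + 1) := by
        rw [he']
        exact Submodule.pow_mem_pow _ (of_sub_one_mem k (FF n m) (Xc n m c)) _
      have hfinal := augPow_combine k (FF n m) L₁.length e' _ _
        (MonoidAlgebra.of k (FF n m) (Xc n m c ^ (b c.1 c.2)))
        (Gam k n m (MonoidAlgebra.of k (AA n m) (Multiplicative.ofAdd b3))) hmemx hIe
      have hN : L₁.length + (e' + 1) = N := by
        have : (c₀ :: L₀).length = N := hL
        omega
      rw [hN] at hfinal
      convert hfinal using 2

def Sset : Set (MonoidAlgebra k (AA n m)) :=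
  {x | ∃ (a : AA n m) (c : Fin m × Fin n),
    x = MonoidAlgebra.of k (AA n m) a * (MonoidAlgebra.of k (AA n m) (tc n m c) - 1)}

lemma span_S_mul (a : AA n m) (x : MonoidAlgebra k (AA n m))
    (hx : x ∈ Submodule.span k (Sset k n m)) :
    MonoidAlgebra.of k (AA n m) a * x ∈ Submodule.span k (Sset k n m) := by
  induction hx using Submodule.span_induction with
  | mem y hy =>
    obtain ⟨a', c, rfl⟩ := hy
    rw [← mul_assoc, ← map_mul]
    exact Submodule.subset_span ⟨a * a', c, rfl⟩
  | zero => rw [mul_zero]; exact Submodule.zero_mem _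
  | add y z hy hz hy' hz' => rw [mul_add]; exact Submodule.add_mem _ hy' hz'
  | smul r y hy hy' => rw [mul_smul_comm]; exact Submodule.smul_mem _ r hy'

lemma of_sub_one_mem_span (g : AA n m) :
    MonoidAlgebra.of k (AA n m) g - 1 ∈ Submodule.span k (Sset k n m) := by
  let T : AddSubgroup (Fin m → Fin n → ℤ) :=
  { carrier := {v | MonoidAlgebra.of k (AA n m) (Multiplicative.ofAdd v) - 1
      ∈ Submodule.span k (Sset k n m)}
    zero_mem' := by
      show MonoidAlgebra.of k (AA n m) (Multiplicative.ofAdd (0 : Fin m → Fin n → ℤ)) - 1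
        ∈ Submodule.span k (Sset k n m)
      have h0 : Multiplicative.ofAdd (0 : Fin m → Fin n → ℤ) = 1 := rfl
      rw [h0, map_one, sub_self]
      exact Submodule.zero_mem _
    add_mem' := by
      intro v w hv hw
      show MonoidAlgebra.of k (AA n m) (Multiplicative.ofAdd (v + w)) - 1
        ∈ Submodule.span k (Sset k n m)
      have hvw : MonoidAlgebra.of k (AA n m) (Multiplicative.ofAdd (v + w)) - 1
          = MonoidAlgebra.of k (AA n m) (Multiplicative.ofAdd v) *
              (MonoidAlgebra.of k (AA n m) (Multiplicative.ofAdd w) - 1)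
            + (MonoidAlgebra.of k (AA n m) (Multiplicative.ofAdd v) - 1) := by
        have h1 : Multiplicative.ofAdd (v + w)
            = Multiplicative.ofAdd v * Multiplicative.ofAdd w := rfl
        rw [h1, map_mul]
        ring
      rw [hvw]
      exact Submodule.add_mem _ (span_S_mul k n m _ _ hw) hv
    neg_mem' := by
      intro v hv
      show MonoidAlgebra.of k (AA n m) (Multiplicative.ofAdd (-v)) - 1
        ∈ Submodule.span k (Sset k n m)
      have hneg : MonoidAlgebra.of k (AA n m) (Multiplicative.ofAdd (-v)) - 1
          = -(MonoidAlgebra.of k (AA n m) (Multiplicative.ofAdd (-v)) *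
              (MonoidAlgebra.of k (AA n m) (Multiplicative.ofAdd v) - 1)) := by
        have hinv : MonoidAlgebra.of k (AA n m) (Multiplicative.ofAdd (-v)) *
            MonoidAlgebra.of k (AA n m) (Multiplicative.ofAdd v) = 1 := by
          rw [← map_mul]
          have h1 : Multiplicative.ofAdd (-v) * Multiplicative.ofAdd v
              = (1 : AA n m) := by
            rw [← ofAdd_add, neg_add_cancel]
            rfl
          rw [h1, map_one]
        rw [mul_sub, hinv, mul_one, neg_sub]
      rw [hneg]
      exact Submodule.neg_mem _ (span_S_mul k n m _ _ hv) }
  have hbase : ∀ c : Fin m × Fin n,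
      (Pi.single c.1 (Pi.single c.2 (1 : ℤ)) : Fin m → Fin n → ℤ) ∈ T := by
    intro c
    show MonoidAlgebra.of k (AA n m) (tc n m c) - 1 ∈ Submodule.span k (Sset k n m)
    have h1 : MonoidAlgebra.of k (AA n m) (tc n m c) - 1
        = MonoidAlgebra.of k (AA n m) 1 * (MonoidAlgebra.of k (AA n m) (tc n m c) - 1) := by
      rw [map_one, one_mul]
    rw [h1]
    exact Submodule.subset_span ⟨1, c, rfl⟩
  have hrepr : Multiplicative.toAdd g
      = ∑ j, ∑ i, (Multiplicative.toAdd g j i) •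
          (Pi.single j (Pi.single i (1 : ℤ)) : Fin m → Fin n → ℤ) := by
    conv_lhs => rw [← Finset.univ_sum_single (Multiplicative.toAdd g)]
    apply Finset.sum_congr rfl
    intro j _
    conv_lhs => rw [← Finset.univ_sum_single (Multiplicative.toAdd g j)]
    have hsum : (Pi.single j (∑ i, Pi.single i (Multiplicative.toAdd g j i))
        : Fin m → Fin n → ℤ)
        = ∑ i, (Pi.single j (Pi.single i (Multiplicative.toAdd g j i)) : Fin m → Fin n → ℤ) :=
      map_sum (AddMonoidHom.single (fun _ : Fin m => (Fin n → ℤ)) j) _ _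
    rw [hsum]
    apply Finset.sum_congr rfl
    intro i _
    rw [← Pi.single_smul, ← Pi.single_smul, smul_eq_mul, mul_one]
  have hall : Multiplicative.toAdd g ∈ T := by
    rw [hrepr]
    exact AddSubgroup.sum_mem T fun j _ => AddSubgroup.sum_mem T fun i _ =>
      AddSubgroup.zsmul_mem T (hbase (j, i)) _
  exact hall

open Pointwise in
lemma augIdeal_le_span : augIdeal k (AA n m) ≤ Submodule.span k (Sset k n m) := by
  intro x hx
  exact Submodule.span_le.mpr
    (by rintro y ⟨g, rfl⟩; exact of_sub_one_mem_span k n m g)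
    (mem_span_of_sub_one k (AA n m) hx)

lemma prod_factors : ∀ (l : List (AA n m × (Fin m × Fin n))),
    (l.map fun q => MonoidAlgebra.of k (AA n m) q.1 *
      (MonoidAlgebra.of k (AA n m) (tc n m q.2) - 1)).prod
    = MonoidAlgebra.of k (AA n m) (l.map Prod.fst).prod *
      ((l.map Prod.snd).map fun c => MonoidAlgebra.of k (AA n m) (tc n m c) - 1).prod := by
  intro l
  induction l with
  | nil => simp [MonoidAlgebra.one_def]
  | cons q l ih =>
    simp only [List.map_cons, List.prod_cons, map_mul, ih]
    ring

open Pointwise in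
lemma key_pow (d : ℕ) (x : MonoidAlgebra k (AA n m)) (hx : x ∈ augPow k (AA n m) d) :
    Gam k n m x ∈ augPow k (FF n m) d := by
  cases d with
  | zero => exact Submodule.mem_top
  | succ d =>
    have h1 : x ∈ Submodule.span k
        ((Sset k n m : Set (MonoidAlgebra k (AA n m))) ^ (d + 1)) := by
      rw [← Submodule.span_pow]
      exact pow_mono k (AA n m) (augIdeal_le_span k n m) (d + 1) hx
    clear hx
    induction h1 using Submodule.span_induction with
    | mem z hz =>
      rw [Set.mem_pow] at hz
      obtain ⟨f, hf⟩ := hz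
      choose afun cfun hfc using fun s => (f s).2
      have hz' : z = MonoidAlgebra.of k (AA n m)
            (Multiplicative.ofAdd (Multiplicative.toAdd ((List.ofFn afun).prod))) *
          ((List.ofFn cfun).map fun c => MonoidAlgebra.of k (AA n m) (tc n m c) - 1).prod := by
        rw [← hf]
        have h2 : (List.ofFn fun s => ((f s) : MonoidAlgebra k (AA n m)))
            = (List.ofFn (fun s => (afun s, cfun s))).map
              (fun q => MonoidAlgebra.of k (AA n m) q.1 *
                (MonoidAlgebra.of k (AA n m) (tc n m q.2) - 1)) := by
          rw [List.map_ofFn]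
          congr 1
          funext s
          exact hfc s
        rw [h2, prod_factors k n m, List.map_ofFn, List.map_ofFn]
        rfl
      rw [hz']
      exact key k n m (d + 1) (List.ofFn cfun) (List.length_ofFn (f := cfun)) _
    | zero => rw [map_zero]; exact Submodule.zero_mem _
    | add y z hy hz hy' hz' => rw [map_add]; exact Submodule.add_mem _ hy' hz'
    | smul r y hy hy' => rw [map_smul]; exact Submodule.smul_mem _ r hy'

end main

/-- (1) `α ∘ γ` is the identity of `(ℤ^n)^{×m}`; hence the `k`-linear
map `Γ : k[(ℤ^n)^{×m}] → k[F_n^{×m}]`, sending the basis element corresponding to `w` to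
the basis element corresponding to `γ(w)`, is a `k`-linear section of the algebra
homomorphism `k[F_n^{×m}] → k[(ℤ^n)^{×m}]` induced by `α`; and (2) for every `d ∈ ℕ`,
`Γ` maps `I_k((ℤ^n)^{×m})^d` into `I_k(F_n^{×m})^d`. -/
theorem stmt_16 (k : Type*) [CommRing k] (n m : ℕ) :
    (∀ v : Multiplicative (Fin m → Fin n → ℤ), alphaM n m (gammaM n m v) = v) ∧
    ∃ Γ : MonoidAlgebra k (Multiplicative (Fin m → Fin n → ℤ)) →ₗ[k]
        MonoidAlgebra k (Fin m → FreeGroup (Fin n)),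
      (∀ v : Multiplicative (Fin m → Fin n → ℤ),
        Γ (MonoidAlgebra.of k (Multiplicative (Fin m → Fin n → ℤ)) v)
          = MonoidAlgebra.of k (Fin m → FreeGroup (Fin n)) (gammaM n m v)) ∧
      (∀ x : MonoidAlgebra k (Multiplicative (Fin m → Fin n → ℤ)),
        (MonoidAlgebra.lift k (MonoidAlgebra k (Multiplicative (Fin m → Fin n → ℤ)))
            (Fin m → FreeGroup (Fin n))
            ((MonoidAlgebra.of k (Multiplicative (Fin m → Fin n → ℤ))).comp (alphaM n m)))
          (Γ x) = x) ∧
      (∀ d : ℕ, ∀ x ∈ augPow k (Multiplicative (Fin m → Fin n → ℤ)) d,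
        Γ x ∈ augPow k (Fin m → FreeGroup (Fin n)) d) := by
  refine ⟨alphaM_gammaM n m, Gam k n m, ?_, ?_, ?_⟩
  · intro v
    rw [MonoidAlgebra.of_apply, MonoidAlgebra.of_apply, Gam_single]
  · intro x
    induction x using MonoidAlgebra.induction_linear with
    | zero => rw [map_zero, map_zero]
    | add f g hf hg => rw [map_add, map_add, hf, hg]
    | single v a =>
      rw [Gam_single, MonoidAlgebra.lift_single]
      show a • MonoidAlgebra.of k _ (alphaM n m (gammaM n m v)) = _
      rw [alphaM_gammaM, MonoidAlgebra.of_apply, MonoidAlgebra.smul_single', mul_one]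
  · intro d x hx
    exact key_pow k n m d x hx
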